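/- Let (G,σ) be a properly vertex-colored digraph with vertex set L that is sf-colored and such that R^bin(G,σ) is consistent. Then the leaf-colored tree (Aho(R^bin(G,σ),L),σ) and every refinement of it explains (G,σ). -/

import Mathlib

/-- A rooted phylogenetic tree with leaf set `V`, encoded by its hierarchy of clusters
(the cluster of a vertex is the set of leaves below it; inner vertices of a phylogenetic
tree have at least two children, so vertices correspond bijectively to clusters). -/
structure PhyloTree (V : Type*) where
  clusters : Set (Set V)
  nonempty_of_mem : ∀ A ∈ clusters, A.Nonempty
  univ_mem : Set.univ ∈ clusters
  singleton_mem : ∀ v : V, {v} ∈ clusters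
  nested : ∀ A ∈ clusters, ∀ B ∈ clusters, A ⊆ B ∨ B ⊆ A ∨ Disjoint A B

namespace PhyloTree

variable {V : Type*}

/-- The cluster of the last common ancestor of `x` and `y`: the smallest cluster
containing both (the clusters containing `x` and `y` form a chain, so their
intersection is the smallest one). -/
def lca (T : PhyloTree V) (x y : V) : Set V :=
  ⋂₀ {A | A ∈ T.clusters ∧ x ∈ A ∧ y ∈ A}

/-- The rooted triple `xy|z` (on three pairwise distinct leaves) is displayed by `T`:
`lca(x,y) ≺ lca(x,z) = lca(y,z)`. -/
def Displays (T : PhyloTree V) (x y z : V) : Prop :=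
  x ≠ y ∧ x ≠ z ∧ y ≠ z ∧ T.lca x y ⊂ T.lca x z ∧ T.lca x z = T.lca y z

/-- `T` displays every triple of `R`; a triple `(x, y, z)` encodes `xy|z`. -/
def DisplaysSet (T : PhyloTree V) (R : Set (V × V × V)) : Prop :=
  ∀ t ∈ R, T.Displays t.1 t.2.1 t.2.2

/-- `r(T)`, the set of triples displayed by `T`. -/
def triples (T : PhyloTree V) : Set (V × V × V) :=
  {t | T.Displays t.1 t.2.1 t.2.2}

/-- `T` is binary: every inner vertex (cluster with at least two leaves) has exactly
two children, i.e. splits into two disjoint proper subclusters. -/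
def IsBinary (T : PhyloTree V) : Prop :=
  ∀ A ∈ T.clusters, 1 < A.ncard →
    ∃ B ∈ T.clusters, ∃ D ∈ T.clusters,
      Disjoint B D ∧ B ∪ D = A ∧ B ⊂ A ∧ D ⊂ A

/-- `T'` is a refinement of `T`: they have the same leaf set and `T` is obtained from
`T'` by contracting inner edges, i.e. every cluster of `T` is a cluster of `T'`. -/
def Refines (T' T : PhyloTree V) : Prop :=
  T.clusters ⊆ T'.clusters

end PhyloTree

section BMG

variable {V C : Type*}

/-- `y` is a best match of `x` in the leaf-colored tree `(T,σ)`. -/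
def bestMatch (T : PhyloTree V) (σ : V → C) (x y : V) : Prop :=
  σ x ≠ σ y ∧ ∀ y' : V, σ y' = σ y → T.lca x y ⊆ T.lca x y'

/-- The leaf-colored tree `(T,σ)` explains the vertex-colored digraph `(E,σ)`,
i.e. `(E,σ)` is the best match graph of `(T,σ)`. -/
def Explains (T : PhyloTree V) (σ : V → C) (E : V → V → Prop) : Prop :=
  ∀ x y, E x y ↔ bestMatch T σ x y

/-- `(E,σ)` is a best match graph. -/
def IsBMG (E : V → V → Prop) (σ : V → C) : Prop :=
  ∃ T : PhyloTree V, Explains T σ E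

/-- `(E,σ)` is binary-explainable. -/
def BinaryExplainable (E : V → V → Prop) (σ : V → C) : Prop :=
  ∃ T : PhyloTree V, T.IsBinary ∧ Explains T σ E

/-- The informative triples `R(G,σ)`: `(a,b,b')` encodes `ab|b'`. -/
def informativeTriples (E : V → V → Prop) (σ : V → C) : Set (V × V × V) :=
  {t | σ t.1 ≠ σ t.2.1 ∧ σ t.2.1 = σ t.2.2 ∧ E t.1 t.2.1 ∧ ¬ E t.1 t.2.2}

/-- The forbidden triples `F(G,σ)`: `(a,b,b')` encodes `ab|b'`. -/
def forbiddenTriples (E : V → V → Prop) (σ : V → C) : Set (V × V × V) :=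
  {t | σ t.1 ≠ σ t.2.1 ∧ σ t.2.1 = σ t.2.2 ∧ t.2.1 ≠ t.2.2 ∧ E t.1 t.2.1 ∧ E t.1 t.2.2}

/-- The extended triple set `R^bin(G,σ) = R(G,σ) ∪ {bb'|a : ab|b' ∈ F(G,σ)}`. -/
def Rbin (E : V → V → Prop) (σ : V → C) : Set (V × V × V) :=
  informativeTriples E σ ∪ {t | (t.2.2, t.1, t.2.1) ∈ forbiddenTriples E σ}

/-- Properly colored: arcs only between vertices of distinct colors. -/
def ProperlyColored (E : V → V → Prop) (σ : V → C) : Prop :=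
  ∀ x y, E x y → σ x ≠ σ y

/-- sf-colored: properly colored and every vertex has, for each color (of the graph)
different from its own, at least one out-neighbor of that color. -/
def SfColored (E : V → V → Prop) (σ : V → C) : Prop :=
  ProperlyColored E σ ∧ ∀ x y : V, σ y ≠ σ x → ∃ z, E x z ∧ σ z = σ y

/-- A triple set is consistent if some tree displays all of its triples. -/
def Consistent (R : Set (V × V × V)) : Prop :=
  ∃ T : PhyloTree V, T.DisplaysSet R

/-- The closure `cl(R)`: all triples displayed by every tree displaying `R`. -/
def tripleClosure (R : Set (V × V × V)) : Set (V × V × V) :=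
  {t | ∀ T : PhyloTree V, T.DisplaysSet R → T.Displays t.1 t.2.1 t.2.2}

/-- `(T,σ)` is a least resolved tree for `(E,σ)`: it explains `(E,σ)` and no tree
obtained from it by contracting an edge (i.e. by removing a non-root inner cluster)
explains `(E,σ)`. -/
def IsLRT (T : PhyloTree V) (σ : V → C) (E : V → V → Prop) : Prop :=
  Explains T σ E ∧
    ∀ A ∈ T.clusters, A ≠ Set.univ → 1 < A.ncard →
      ∀ T' : PhyloTree V, T'.clusters = T.clusters \ {A} → ¬ Explains T' σ E

end BMG

section Aho

variable {V : Type*}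

/-- Adjacency in the Aho graph `[R,L]`: `x` and `y` are joined whenever `xy|z ∈ R`
for some `z ∈ L` (only triples with all leaves in `L` are taken into account). -/
def ahoAdj (R : Set (V × V × V)) (L : Set V) (x y : V) : Prop :=
  x ∈ L ∧ y ∈ L ∧ ∃ z ∈ L, (x, y, z) ∈ R ∨ (y, x, z) ∈ R

/-- The vertex set of the connected component of `x` in the Aho graph `[R,L]`. -/
def ahoComponent (R : Set (V × V × V)) (L : Set V) (x : V) : Set V :=
  {y | Relation.ReflTransGen (ahoAdj R L) x y}

/-- The clusters of the Aho tree `Aho(R, V)`: the full leaf set, and recursively the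
connected components of the Aho graphs. -/
inductive IsAhoCluster (R : Set (V × V × V)) : Set V → Prop
  | univ : IsAhoCluster R Set.univ
  | component {L : Set V} {x : V} :
      IsAhoCluster R L → x ∈ L → IsAhoCluster R (ahoComponent R L x)

/-- `T` is the Aho tree (`BUILD` tree) of the triple set `R` on the full leaf set. -/
def IsAhoTree (R : Set (V × V × V)) (T : PhyloTree V) : Prop :=
  T.clusters = {A | IsAhoCluster R A}

/-- The union of the leaf sets of the triples in `R`. -/
def tripleLeaves (R : Set (V × V × V)) : Set V :=
  {v | ∃ t ∈ R, v = t.1 ∨ v = t.2.1 ∨ v = t.2.2}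

end Aho

section MyHelpers

variable {V : Type*} [Fintype V]

lemma PhyloTree.lca_comm (T : PhyloTree V) (x y : V) : T.lca x y = T.lca y x := by
  have h : {A | A ∈ T.clusters ∧ x ∈ A ∧ y ∈ A} = {A | A ∈ T.clusters ∧ y ∈ A ∧ x ∈ A} := by
    ext A; simp only [Set.mem_setOf_eq]; tauto
  unfold PhyloTree.lca
  rw [h]

lemma PhyloTree.exists_min_cluster (T : PhyloTree V) (A : Set V) (hA : A.Nonempty) :
    ∃ B ∈ T.clusters, A ⊆ B ∧ ∀ P ∈ T.clusters, A ⊆ P → B ⊆ P := by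
  obtain ⟨a, ha⟩ := hA
  set S : Set (Set V) := {P | P ∈ T.clusters ∧ A ⊆ P} with hSdef
  have hne : S.Nonempty := ⟨Set.univ, T.univ_mem, Set.subset_univ A⟩
  obtain ⟨B, hB, hmin⟩ : ∃ B ∈ S, ∀ P ∈ S, id P ≤ id B → id B = id P := by
    obtain ⟨B, hB, hm⟩ := (Set.toFinite S).exists_minimal hne
    exact ⟨B, hB, fun P hP h => le_antisymm (hm hP h) h⟩
  refine ⟨B, hB.1, hB.2, ?_⟩
  intro P hP hAP
  rcases T.nested B hB.1 P hP with h | h | h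
  · exact h
  · exact le_of_eq (hmin P ⟨hP, hAP⟩ h)
  · exact (Set.disjoint_left.mp h (hB.2 ha) (hAP ha)).elim

lemma PhyloTree.lca_spec (T : PhyloTree V) (x y : V) :
    T.lca x y ∈ T.clusters ∧ x ∈ T.lca x y ∧ y ∈ T.lca x y ∧
      ∀ P ∈ T.clusters, x ∈ P → y ∈ P → T.lca x y ⊆ P := by
  obtain ⟨B, hB, hsub, hmin⟩ := T.exists_min_cluster {x, y} ⟨x, by simp⟩
  have hxB : x ∈ B := hsub (by simp)
  have hyB : y ∈ B := hsub (by simp)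
  have hlca : T.lca x y = B := by
    apply subset_antisymm
    · exact Set.sInter_subset_of_mem ⟨hB, hxB, hyB⟩
    · apply Set.subset_sInter
      rintro P ⟨hP, hxP, hyP⟩
      exact hmin P hP (by simp [Set.insert_subset_iff, hxP, hyP])
  rw [hlca]
  exact ⟨hB, hxB, hyB, fun P hP hx hy =>
    hmin P hP (by simp [Set.insert_subset_iff, hx, hy])⟩

lemma PhyloTree.exists_max_proper (T : PhyloTree V) {B : Set V} (hB : B ∈ T.clusters)
    {u v : V} (hu : u ∈ B) (hv : v ∈ B) (huv : u ≠ v) :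
    ∃ D ∈ T.clusters, u ∈ D ∧ D ⊆ B ∧ D ≠ B ∧
      ∀ P ∈ T.clusters, u ∈ P → P ⊆ B → P ≠ B → P ⊆ D := by
  set S : Set (Set V) := {P | P ∈ T.clusters ∧ u ∈ P ∧ P ⊆ B ∧ P ≠ B} with hSdef
  have hne : S.Nonempty := by
    refine ⟨{u}, T.singleton_mem u, rfl, Set.singleton_subset_iff.mpr hu, ?_⟩
    intro h
    rw [← h] at hv
    exact huv (Set.mem_singleton_iff.mp hv).symm
  obtain ⟨D, hD, hmax⟩ : ∃ D ∈ S, ∀ P ∈ S, id D ≤ id P → id D = id P := by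
    obtain ⟨D, hD, hm⟩ := (Set.toFinite S).exists_maximal hne
    exact ⟨D, hD, fun P hP h => le_antisymm h (hm hP h)⟩
  refine ⟨D, hD.1, hD.2.1, hD.2.2.1, hD.2.2.2, ?_⟩
  intro P hP huP hPB hPne
  rcases T.nested P hP D hD.1 with h | h | h
  · exact h
  · exact le_of_eq (hmax P ⟨hP, huP, hPB, hPne⟩ h).symm
  · exact (Set.disjoint_left.mp h huP hD.2.1).elim

lemma ahoAdj_symm {R : Set (V × V × V)} {L : Set V} {x y : V}
    (h : ahoAdj R L x y) : ahoAdj R L y x := by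
  obtain ⟨hx, hy, z, hz, ht⟩ := h
  exact ⟨hy, hx, z, hz, ht.symm⟩

lemma ahoComponent_subset {R : Set (V × V × V)} {L : Set V} {x : V} (hx : x ∈ L) :
    ahoComponent R L x ⊆ L := by
  intro y hy
  induction hy with
  | refl => exact hx
  | tail _ hadj _ => exact hadj.2.1

lemma aho_closed {R : Set (V × V × V)} {x y z : V} (hR : (x, y, z) ∈ R)
    {A : Set V} (hA : IsAhoCluster R A) :
    ((x ∈ A ∧ z ∈ A) → y ∈ A) ∧ ((y ∈ A ∧ z ∈ A) → x ∈ A) := by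
  induction hA with
  | univ => simp
  | @component L w hL hw ih =>
    have hsub : ahoComponent R L w ⊆ L := ahoComponent_subset hw
    constructor
    · rintro ⟨hxA, hzA⟩
      have hyL : y ∈ L := ih.1 ⟨hsub hxA, hsub hzA⟩
      have hadj : ahoAdj R L x y := ⟨hsub hxA, hyL, z, hsub hzA, Or.inl hR⟩
      exact Relation.ReflTransGen.tail hxA hadj
    · rintro ⟨hyA, hzA⟩
      have hxL : x ∈ L := ih.2 ⟨hsub hyA, hsub hzA⟩
      have hadj : ahoAdj R L y x := ⟨hsub hyA, hxL, z, hsub hzA, Or.inr hR⟩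
      exact Relation.ReflTransGen.tail hyA hadj

lemma aho_not_connected {R : Set (V × V × V)} (hcons : Consistent R) {A : Set V}
    {x z : V} (hx : x ∈ A) (hz : z ∈ A) (hxz : x ≠ z) :
    ¬ (A ⊆ ahoComponent R A x) := by
  obtain ⟨S, hS⟩ := hcons
  obtain ⟨B, hB, hAB, hBmin⟩ := S.exists_min_cluster A ⟨x, hx⟩
  obtain ⟨D, hD, hxD, hDB, hDne, hDmax⟩ := S.exists_max_proper hB (hAB hx) (hAB hz) hxz
  intro hconn
  have hclass : ∀ {u v : V}, u ∈ D → ahoAdj R A u v → v ∈ D := by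
    intro u v huD hadj
    obtain ⟨huA, hvA, w, hwA, ht⟩ := hadj
    have hP : ∃ P ∈ S.clusters, u ∈ P ∧ v ∈ P ∧ P ⊆ B ∧ P ≠ B := by
      rcases ht with ht | ht
      · have hd := hS _ ht
        obtain ⟨_, _, _, hss, _⟩ := hd
        have hPc := S.lca_spec u v
        have hQc := S.lca_spec u w
        have hQB : S.lca u w ⊆ B := hQc.2.2.2 B hB (hAB huA) (hAB hwA)
        refine ⟨S.lca u v, hPc.1, hPc.2.1, hPc.2.2.1, hss.subset.trans hQB, ?_⟩
        intro h
        exact absurd (h ▸ hss) (fun hc => hc.not_subset hQB)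
      · have hd := hS _ ht
        obtain ⟨_, _, _, hss, _⟩ := hd
        have hPc := S.lca_spec v u
        have hQc := S.lca_spec v w
        have hQB : S.lca v w ⊆ B := hQc.2.2.2 B hB (hAB hvA) (hAB hwA)
        refine ⟨S.lca v u, hPc.1, hPc.2.2.1, hPc.2.1, hss.subset.trans hQB, ?_⟩
        intro h
        exact absurd (h ▸ hss) (fun hc => hc.not_subset hQB)
    obtain ⟨P, hPc, huP, hvP, hPB, hPne⟩ := hP
    rcases S.nested P hPc D hD with h | h | h
    · exact h hvP
    · exact hDmax P hPc (h hxD) hPB hPne hvP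
    · exact (Set.disjoint_left.mp h huP huD).elim
  have hcomp : ahoComponent R A x ⊆ D := by
    intro y hy
    induction hy with
    | refl => exact hxD
    | tail _ hadj ih => exact hclass ih hadj
  exact hDne (subset_antisymm hDB (hBmin D hD (fun a ha => hcomp (hconn ha))))

lemma aho_displays {R : Set (V × V × V)} (hcons : Consistent R)
    {T : PhyloTree V} (hT : IsAhoTree R T) {x y z : V} (hR : (x, y, z) ∈ R)
    (hxy : x ≠ y) (hxz : x ≠ z) (hyz : y ≠ z) : T.Displays x y z := by
  obtain ⟨hAc, hxA, hzA, hAmin⟩ := T.lca_spec x z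
  set A := T.lca x z with hAdef
  have hAaho : IsAhoCluster R A := by have h := hAc; rw [hT] at h; exact h
  have hyA : y ∈ A := (aho_closed hR hAaho).1 ⟨hxA, hzA⟩
  set Cc := ahoComponent R A x with hCdef
  have hCaho : IsAhoCluster R Cc := IsAhoCluster.component hAaho hxA
  have hCc : Cc ∈ T.clusters := by rw [hT]; exact hCaho
  have hxC : x ∈ Cc := Relation.ReflTransGen.refl
  have hyC : y ∈ Cc := Relation.ReflTransGen.single ⟨hxA, hyA, z, hzA, Or.inl hR⟩
  have hCA : Cc ⊆ A := ahoComponent_subset hxA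
  have hzC : z ∉ Cc := by
    intro hzCc
    have hAC : A ⊆ Cc := hAmin Cc hCc hxC hzCc
    exact aho_not_connected hcons hxA hzA hxz (hAC.trans (subset_refl _))
  obtain ⟨hxyC_c, hxxy, hyxy, hxymin⟩ := T.lca_spec x y
  have hxyC : T.lca x y ⊆ Cc := hxymin Cc hCc hxC hyC
  have hss : T.lca x y ⊂ T.lca x z := by
    rw [Set.ssubset_iff_of_subset (hxymin A hAc hxA hyA)]
    exact ⟨z, hzA, fun hc => hzC (hxyC hc)⟩
  have heq : T.lca x z = T.lca y z := by
    obtain ⟨hyzc, hyyz, hzyz, hyzmin⟩ := T.lca_spec y z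
    have hyzaho : IsAhoCluster R (T.lca y z) := by have h := hyzc; rw [hT] at h; exact h
    have hxyz : x ∈ T.lca y z := (aho_closed hR hyzaho).2 ⟨hyyz, hzyz⟩
    exact subset_antisymm (hAmin _ hyzc hxyz hzyz) (hyzmin A hAc hyA hzA)
  exact ⟨hxy, hxz, hyz, hss, heq⟩

lemma displays_of_refines {T T' : PhyloTree V} (h : T'.Refines T)
    {x y z : V} (hd : T.Displays x y z) : T'.Displays x y z := by
  obtain ⟨hxy, hxz, hyz, hss, heq⟩ := hd
  obtain ⟨hAc, hxA, hyA, hAmin⟩ := T.lca_spec x y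
  set A := T.lca x y with hAdef
  obtain ⟨hBc, hxB, hzB, hBmin⟩ := T.lca_spec x z
  have hAc' : A ∈ T'.clusters := h hAc
  have hzA : z ∉ A := by
    intro hzA
    exact hss.not_subset (hBmin A hAc hxA hzA)
  obtain ⟨hPc, hxP, hzP, hPmin⟩ := T'.lca_spec x z
  have hAP : A ⊆ T'.lca x z := by
    rcases T'.nested A hAc' _ hPc with h1 | h1 | h1
    · exact h1
    · exact absurd (h1 hzP) hzA
    · exact (Set.disjoint_left.mp h1 hxA hxP).elim
  obtain ⟨hQc, hyQ, hzQ, hQmin⟩ := T'.lca_spec y z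
  have hAQ : A ⊆ T'.lca y z := by
    rcases T'.nested A hAc' _ hQc with h1 | h1 | h1
    · exact h1
    · exact absurd (h1 hzQ) hzA
    · exact (Set.disjoint_left.mp h1 hyA hyQ).elim
  have heq' : T'.lca x z = T'.lca y z := by
    apply subset_antisymm
    · exact hPmin _ hQc (hAQ hxA) hzQ
    · exact hQmin _ hPc (hAP hyA) hzP
  obtain ⟨_, _, _, hxymin'⟩ := T'.lca_spec x y
  have hxyA : T'.lca x y ⊆ A := hxymin' A hAc' hxA hyA
  have hss' : T'.lca x y ⊂ T'.lca x z := by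
    rw [Set.ssubset_iff_of_subset (hxyA.trans hAP)]
    exact ⟨z, hzP, fun hc => hzA (hxyA hc)⟩
  exact ⟨hxy, hxz, hyz, hss', heq'⟩

end MyHelpers

/-- Theorem: Rbin-MAIN, second part.
Let `(G,σ)` be a properly vertex-colored digraph with vertex set `L` that is sf-colored
and such that `R^bin(G,σ)` is consistent. Then the leaf-colored tree
`(Aho(R^bin(G,σ),L),σ)` and every refinement of it explains `(G,σ)`. -/
theorem stmt4 {V C : Type*} [Fintype V] (E : V → V → Prop) (σ : V → C)
    (hsf : SfColored E σ) (hcons : Consistent (Rbin E σ))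
    (T : PhyloTree V) (hT : IsAhoTree (Rbin E σ) T) :
    Explains T σ E ∧ ∀ T' : PhyloTree V, T'.Refines T → Explains T' σ E := by
  have key : ∀ T' : PhyloTree V, T'.Refines T → Explains T' σ E := by
    intro T' href x y
    constructor
    · intro hxy
      have hcol : σ x ≠ σ y := hsf.1 x y hxy
      refine ⟨hcol, ?_⟩
      intro y' hc
      by_cases hyy' : y' = y
      · subst hyy'; exact subset_refl _
      by_cases hE : E x y'
      · -- forbidden triple: (y, y', x) ∈ Rbin
        have hR : (y, y', x) ∈ Rbin E σ :=
          Or.inr ⟨hcol, hc.symm, fun h => hyy' h.symm, hxy, hE⟩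
        have hd : T'.Displays y y' x := displays_of_refines href
          (aho_displays hcons hT hR (fun h => hyy' h.symm)
            (fun h => hcol (congrArg σ h).symm)
            (fun h => hcol ((congrArg σ h).symm.trans hc)))
        have heq := hd.2.2.2.2
        rw [T'.lca_comm x y, heq, T'.lca_comm y' x]
      · -- informative triple: (x, y, y') ∈ Rbin
        have hR : (x, y, y') ∈ Rbin E σ := Or.inl ⟨hcol, hc.symm, hxy, hE⟩
        have hd : T'.Displays x y y' := displays_of_refines href
          (aho_displays hcons hT hR (fun h => hcol (congrArg σ h))
            (fun h => hcol ((congrArg σ h).trans hc)) (fun h => hyy' h.symm))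
        exact hd.2.2.2.1.subset
    · rintro ⟨hne, hmin⟩
      by_contra hE
      obtain ⟨z, hEz, hσz⟩ := hsf.2 x y hne.symm
      have hzy : z ≠ y := fun h => hE (h ▸ hEz)
      have hcolz : σ x ≠ σ z := fun h => hne (h.trans hσz)
      have hR : (x, z, y) ∈ Rbin E σ := Or.inl ⟨hcolz, hσz, hEz, hE⟩
      have hd : T'.Displays x z y := displays_of_refines href
        (aho_displays hcons hT hR (fun h => hcolz (congrArg σ h))
          (fun h => hne (congrArg σ h)) hzy)
      exact hd.2.2.2.1.not_subset (hmin z hσz)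
  exact ⟨key T (subset_refl _), key⟩
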